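/- Let G be a connected simple graph on vertices {0,...,n} with root r, and let T be a spanning tree of G rooted at r. The number of κ-inversions of T equals the number of edges of G not in T, minus the number of edges {u,v} of G not in T such that neither endpoint is a proper ancestor in T of the other. Equivalently: the map sending each non-tree edge e = {i',j} of G (where i' is burnt before j in the DFS order of T) to the pair (i,j), with i the child of i' on the tree path from i' to j, is well-defined when T = DFS(G), and is a bijection onto the set of κ-inversions of DFS(G). -/

import Mathlib

open Finset

namespace PFG

variable {n : ℕ}

/-- `deg_{Sᶜ}(i)`: the number of edges `{i,j}` of `G` with `j ∉ S`. -/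
noncomputable def sDeg (G : SimpleGraph (Fin (n+1))) (S : Finset (Fin (n+1))) (i : Fin (n+1)) : ℕ :=
  Set.ncard {j : Fin (n+1) | G.Adj i j ∧ j ∉ S}

/-- `P` is a parking function for `G` with respect to the root `r`:
for every nonempty `S ⊆ V \ {r}` there is `i ∈ S` with `P i < deg_{Sᶜ}(i)`. -/
def IsParkingFunction (G : SimpleGraph (Fin (n+1))) (r : Fin (n+1))
    (P : Fin (n+1) → ℕ) : Prop :=
  ∀ S : Finset (Fin (n+1)), S.Nonempty → r ∉ S → ∃ i ∈ S, P i < sDeg G S i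

/-- The degree of a parking function: the sum of its values over non-root vertices. -/
def degPF (r : Fin (n+1)) (P : Fin (n+1) → ℕ) : ℕ := ∑ v ∈ univ.erase r, P v

/-- A spanning tree of `G` rooted at `r`, encoded by its parent function:
each non-root vertex is adjacent (in `G`) to its parent, and iterating
the parent map from any vertex reaches the root. -/
structure RootedSpanningTree (G : SimpleGraph (Fin (n+1))) (r : Fin (n+1)) where
  parent : Fin (n+1) → Fin (n+1)
  parent_root : parent r = r
  adj_parent : ∀ v, v ≠ r → G.Adj (parent v) v
  reaches_root : ∀ v, ∃ k, parent^[k] v = r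

/-- `i` is a (proper) ancestor of `j` in the rooted tree with parent map `par`. -/
def IsAncestor (par : Fin (n+1) → Fin (n+1)) (i j : Fin (n+1)) : Prop :=
  ∃ k, 0 < k ∧ par^[k] j = i

/-- An inversion: `i` is an ancestor of `j` and `i > j`. -/
def IsInversion (par : Fin (n+1) → Fin (n+1)) (i j : Fin (n+1)) : Prop :=
  IsAncestor par i j ∧ j < i

/-- A κ-inversion: an inversion `(i,j)` such that moreover `i` is not the
root and the parent of `i` is adjacent to `j` in `G`. -/
def IsKappaInversion (G : SimpleGraph (Fin (n+1))) (r : Fin (n+1))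
    (par : Fin (n+1) → Fin (n+1)) (i j : Fin (n+1)) : Prop :=
  IsAncestor par i j ∧ j < i ∧ i ≠ r ∧ G.Adj (par i) j

/-- the κ-number: the number of κ-inversions. -/
noncomputable def kappaNum (G : SimpleGraph (Fin (n+1))) (r : Fin (n+1))
    (par : Fin (n+1) → Fin (n+1)) : ℕ :=
  Set.ncard {p : Fin (n+1) × Fin (n+1) | IsKappaInversion G r par p.1 p.2}

/-- the number of inversions. -/
noncomputable def invNum (par : Fin (n+1) → Fin (n+1)) : ℕ :=
  Set.ncard {p : Fin (n+1) × Fin (n+1) | IsInversion par p.1 p.2}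

open Classical in
/-- The neighbors of `i` in `G`, listed in decreasing order. -/
noncomputable def nbrs (G : SimpleGraph (Fin (n+1))) (i : Fin (n+1)) : List (Fin (n+1)) :=
  ((univ.filter (fun j => G.Adj i j)).sort (· ≤ ·)).reverse

/-- One step of depth-first search from vertex `i`: scan the neighbors of `i`
in decreasing order; each unvisited neighbor `j` is visited, gets parent `i`,
and the search recurses from `j`.  The state is the pair
(visited vertices, parent map). -/
noncomputable def dfsStep (G : SimpleGraph (Fin (n+1))) :
    ℕ → Fin (n+1) → Finset (Fin (n+1)) × (Fin (n+1) → Fin (n+1)) →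
      Finset (Fin (n+1)) × (Fin (n+1) → Fin (n+1))
  | 0, _, st => st
  | (fuel+1), i, st =>
      (nbrs G i).foldl
        (fun st j =>
          if j ∈ st.1 then st
          else dfsStep G fuel j (insert j st.1, Function.update st.2 j i)) st

/-- The parent map of the depth-first search tree of `G` rooted at `r`,
visiting neighbors in decreasing numerical order. -/
noncomputable def dfsParent (G : SimpleGraph (Fin (n+1))) (r : Fin (n+1)) :
    Fin (n+1) → Fin (n+1) :=
  (dfsStep G (n+1) r ({r}, fun _ => r)).2

/-- The set of edges of the rooted tree given by parent map `par`. -/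
def treeEdges (r : Fin (n+1)) (par : Fin (n+1) → Fin (n+1)) : Set (Sym2 (Fin (n+1))) :=
  {e | ∃ v, v ≠ r ∧ e = s(par v, v)}

end PFG

namespace PFGProof
open PFG

variable {n : ℕ}

abbrev DfsSt (n : ℕ) := Finset (Fin (n+1)) × (Fin (n+1) → Fin (n+1))

def Ext (st st' : DfsSt n) : Prop := st.1 ⊆ st'.1 ∧ ∀ v ∈ st.1, st'.2 v = st.2 v

lemma Ext.refl (st : DfsSt n) : Ext st st := ⟨Finset.Subset.refl _, fun _ _ => rfl⟩

lemma Ext.trans {s t u : DfsSt n} (h1 : Ext s t) (h2 : Ext t u) : Ext s u :=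
  ⟨h1.1.trans h2.1, fun v hv => (h2.2 v (h1.1 hv)).trans (h1.2 v hv)⟩

def Inv (r : Fin (n+1)) (st : DfsSt n) : Prop :=
  r ∈ st.1 ∧ st.2 r = r ∧ (∀ v ∈ st.1, st.2 v ∈ st.1) ∧ ∀ v ∈ st.1, ∃ k, st.2^[k] v = r

def OInv (G : SimpleGraph (Fin (n+1))) (r : Fin (n+1)) (st : DfsSt n) : Prop :=
  ∀ i v : Fin (n+1), v ∈ st.1 → (∃ m, 0 < m ∧ st.2^[m] v = i) → i ≠ r →
    G.Adj (st.2 i) v → v < i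

def Stack (G : SimpleGraph (Fin (n+1))) (r i : Fin (n+1)) (st : DfsSt n) : Prop :=
  ∀ m (w : Fin (n+1)), st.2^[m] i ≠ r → G.Adj (st.2 (st.2^[m] i)) w →
    st.2^[m] i < w → w ∈ st.1

def Desc (i : Fin (n+1)) (st st' : DfsSt n) : Prop :=
  ∀ w ∈ st'.1, w ∉ st.1 → ∃ m, 0 < m ∧ st'.2^[m] w = i ∧
    ∀ m', 0 < m' → m' < m → st'.2^[m'] w ∉ st.1

lemma ext_iter {st st' : DfsSt n} (hcl : ∀ v ∈ st.1, st.2 v ∈ st.1) (he : Ext st st')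
    {v : Fin (n+1)} (hv : v ∈ st.1) (m : ℕ) :
    st'.2^[m] v = st.2^[m] v ∧ st.2^[m] v ∈ st.1 := by
  induction m with
  | zero => exact ⟨rfl, hv⟩
  | succ m ih =>
    rw [Function.iterate_succ_apply', Function.iterate_succ_apply', ih.1, he.2 _ ih.2]
    exact ⟨rfl, hcl _ ih.2⟩



lemma nbrs_sorted (G : SimpleGraph (Fin (n+1))) (i : Fin (n+1)) :
    List.Pairwise (fun a b : Fin (n+1) => b ≤ a) (nbrs G i) := by
  classical
  unfold nbrs
  rw [List.pairwise_reverse]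
  apply Finset.pairwise_sort

lemma mem_nbrs (G : SimpleGraph (Fin (n+1))) (i w : Fin (n+1)) :
    w ∈ nbrs G i ↔ G.Adj i w := by
  classical
  unfold nbrs
  simp

lemma dfsA (G : SimpleGraph (Fin (n+1))) (r : Fin (n+1)) :
    ∀ (fuel : ℕ) (i : Fin (n+1)) (st : DfsSt n), i ∈ st.1 → Inv r st → OInv G r st →
      Stack G r i st →
      Ext st (dfsStep G fuel i st) ∧ Inv r (dfsStep G fuel i st) ∧
        OInv G r (dfsStep G fuel i st) ∧ Desc i st (dfsStep G fuel i st) := by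
  intro fuel
  induction fuel with
  | zero =>
    intro i st hi hInv hO _
    simp only [dfsStep]
    exact ⟨Ext.refl st, hInv, hO, fun w hw hw' => absurd hw hw'⟩
  | succ fuel ih =>
    intro i st hi hInv hO hS
    simp only [dfsStep]
    have hclst : ∀ v ∈ st.1, st.2 v ∈ st.1 := hInv.2.2.1
    have key : ∀ (L : List (Fin (n+1))), List.Pairwise (fun a b : Fin (n+1) => b ≤ a) L →
        ∀ st₁ : DfsSt n, Ext st st₁ → Inv r st₁ → OInv G r st₁ → Desc i st st₁ →
        (∀ w, G.Adj i w → w ∈ L ∨ w ∈ st₁.1) →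
        Ext st (List.foldl
            (fun st j => if j ∈ st.1 then st
              else dfsStep G fuel j (insert j st.1, Function.update st.2 j i)) st₁ L) ∧
        Inv r (List.foldl
            (fun st j => if j ∈ st.1 then st
              else dfsStep G fuel j (insert j st.1, Function.update st.2 j i)) st₁ L) ∧
        OInv G r (List.foldl
            (fun st j => if j ∈ st.1 then st
              else dfsStep G fuel j (insert j st.1, Function.update st.2 j i)) st₁ L) ∧
        Desc i st (List.foldl
            (fun st j => if j ∈ st.1 then st
              else dfsStep G fuel j (insert j st.1, Function.update st.2 j i)) st₁ L) := by
      intro L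
      induction L with
      | nil =>
        intro _ st₁ h1 h2 h3 h4 _
        exact ⟨h1, h2, h3, h4⟩
      | cons j tl ihL =>
        intro hsort st₁ hE1 hInv1 hO1 hD1 hmem
        have htl_sort : List.Pairwise (fun a b : Fin (n+1) => b ≤ a) tl :=
          (List.pairwise_cons.mp hsort).2
        have htl_le : ∀ b ∈ tl, b ≤ j := (List.pairwise_cons.mp hsort).1
        simp only [List.foldl_cons]
        by_cases hj : j ∈ st₁.1
        · rw [if_pos hj]
          refine ihL htl_sort st₁ hE1 hInv1 hO1 hD1 ?_
          intro w hw
          rcases hmem w hw with hwL | hwv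
          · rcases List.mem_cons.mp hwL with rfl | hwtl
            · exact Or.inr hj
            · exact Or.inl hwtl
          · exact Or.inr hwv
        · rw [if_neg hj]
          set st₂ : DfsSt n := (insert j st₁.1, Function.update st₁.2 j i) with hst₂
          have hcl1 : ∀ v ∈ st₁.1, st₁.2 v ∈ st₁.1 := hInv1.2.2.1
          have hE12 : Ext st₁ st₂ := by
            refine ⟨Finset.subset_insert _ _, fun v hv => ?_⟩
            exact Function.update_of_ne (ne_of_mem_of_not_mem hv hj) _ _
          have hEs2 : Ext st st₂ := hE1.trans hE12
          have hj2 : j ∈ st₂.1 := Finset.mem_insert_self _ _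
          have hjst : j ∉ st.1 := fun h => hj (hE1.1 h)
          have hst2j : st₂.2 j = i := Function.update_self _ _ _
          have hiter2i : ∀ m, st₂.2^[m] i = st.2^[m] i ∧ st.2^[m] i ∈ st.1 :=
            fun m => ext_iter hclst hEs2 hi m
          have hInv2 : Inv r st₂ := by
            refine ⟨Finset.mem_insert_of_mem hInv1.1, ?_, ?_, ?_⟩
            · rw [hE12.2 r hInv1.1]; exact hInv1.2.1
            · intro v hv
              rcases Finset.mem_insert.mp hv with rfl | hv
              · rw [hst2j]; exact Finset.mem_insert_of_mem (hE1.1 hi)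
              · rw [hE12.2 v hv]; exact Finset.mem_insert_of_mem (hcl1 v hv)
            · intro v hv
              rcases Finset.mem_insert.mp hv with rfl | hv
              · obtain ⟨k, hk⟩ := hInv1.2.2.2 i (hE1.1 hi)
                refine ⟨k + 1, ?_⟩
                rw [Function.iterate_succ_apply, hst2j,
                  (ext_iter hcl1 hE12 (hE1.1 hi) k).1, hk]
              · obtain ⟨k, hk⟩ := hInv1.2.2.2 v hv
                exact ⟨k, by rw [(ext_iter hcl1 hE12 hv k).1, hk]⟩
          have hO2 : OInv G r st₂ := by
            intro i0 v hv hanc hi0r hadj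
            rcases Finset.mem_insert.mp hv with hvj | hv'
            · -- v = j
              rw [hvj] at hanc hadj ⊢
              obtain ⟨m, hm, hc⟩ := hanc
              obtain ⟨m', rfl⟩ := Nat.exists_eq_succ_of_ne_zero (Nat.pos_iff_ne_zero.mp hm)
              rw [Function.iterate_succ_apply, hst2j, (hiter2i m').1] at hc
              have hi0st : i0 ∈ st.1 := hc ▸ (hiter2i m').2
              have hadj' : G.Adj (st.2 (st.2^[m'] i)) j := by
                rw [hc]; rwa [hEs2.2 i0 hi0st] at hadj
              have hnlt : ¬ (i0 < j) := fun hlt =>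
                hjst (hS m' j (hc.symm ▸ hi0r) hadj' (hc.symm ▸ hlt))
              exact lt_of_le_of_ne (not_lt.mp hnlt) (fun h => hjst (h.symm ▸ hi0st))
            · obtain ⟨m, hm, hc⟩ := hanc
              have h2 := ext_iter hcl1 hE12 hv' m
              rw [h2.1] at hc
              have hi0st : i0 ∈ st₁.1 := hc ▸ h2.2
              exact hO1 i0 v hv' ⟨m, hm, hc⟩ hi0r
                (by rwa [hE12.2 i0 hi0st] at hadj)
          have hS2 : Stack G r j st₂ := by
            intro m w hne hadj hlt
            cases m with
            | zero =>
              simp only [Function.iterate_zero, id_eq] at hne hadj hlt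
              rw [hst2j] at hadj
              rcases hmem w hadj with hwL | hwv
              · rcases List.mem_cons.mp hwL with rfl | hwtl
                · exact absurd hlt (lt_irrefl _)
                · exact absurd hlt (not_lt.mpr (htl_le w hwtl))
              · exact hE12.1 hwv
            | succ m =>
              rw [Function.iterate_succ_apply, hst2j, (hiter2i m).1] at hne hadj hlt
              rw [hEs2.2 _ (hiter2i m).2] at hadj
              exact hEs2.1 (hS m w hne hadj hlt)
          obtain ⟨hE23, hInv3, hO3, hD3⟩ := ih j st₂ hj2 hInv2 hO2 hS2
          set st₃ := dfsStep G fuel j st₂ with hst₃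
          have hE13 : Ext st₁ st₃ := hE12.trans hE23
          have hEs3 : Ext st st₃ := hE1.trans hE13
          refine ihL htl_sort st₃ hEs3 hInv3 hO3 ?_ ?_
          · -- Desc i st st₃
            intro w hw hwst
            by_cases hw1 : w ∈ st₁.1
            · obtain ⟨m, hm, hc, hint⟩ := hD1 w hw1 hwst
              refine ⟨m, hm, ?_, ?_⟩
              · rw [(ext_iter hcl1 hE13 hw1 m).1]; exact hc
              · intro m' h1' h2'
                rw [(ext_iter hcl1 hE13 hw1 m').1]; exact hint m' h1' h2'
            · by_cases hwj : w = j
              · subst hwj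
                refine ⟨1, Nat.one_pos, ?_, ?_⟩
                · rw [Function.iterate_one, hE23.2 w hj2, hst2j]
                · intro m' h1' h2'; omega
              · have hw2 : w ∉ st₂.1 := by
                  simp only [hst₂, Finset.mem_insert]
                  push_neg
                  exact ⟨hwj, hw1⟩
                obtain ⟨m, hm, hc, hint⟩ := hD3 w hw hw2
                refine ⟨m + 1, Nat.succ_pos _, ?_, ?_⟩
                · rw [Function.iterate_succ_apply', hc, hE23.2 j hj2, hst2j]
                · intro m' h1' h2'
                  rcases Nat.lt_or_ge m' m with hlt' | hge
                  · exact fun h => hint m' h1' hlt' (hEs2.1 h)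
                  · have : m' = m := by omega
                    subst this
                    rw [hc]; exact hjst
          · intro w hw
            rcases hmem w hw with hwL | hwv
            · rcases List.mem_cons.mp hwL with rfl | hwtl
              · exact Or.inr (hE23.1 hj2)
              · exact Or.inl hwtl
            · exact Or.inr (hE13.1 hwv)
    have hmem0 : ∀ w, G.Adj i w → w ∈ nbrs G i ∨ w ∈ st.1 :=
      fun w hw => Or.inl ((mem_nbrs G i w).mpr hw)
    exact key (nbrs G i) (nbrs_sorted G i) st (Ext.refl st) hInv hO
      (fun w hw hw' => absurd hw hw') hmem0

lemma dfsB (G : SimpleGraph (Fin (n+1))) :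
    ∀ (fuel : ℕ) (i : Fin (n+1)) (st : DfsSt n), (univ \ st.1).card < fuel →
      st.1 ⊆ (dfsStep G fuel i st).1 ∧
      (∀ w, G.Adj i w → w ∈ (dfsStep G fuel i st).1) ∧
      (∀ w ∈ (dfsStep G fuel i st).1, w ∉ st.1 → ∀ w', G.Adj w w' →
        w' ∈ (dfsStep G fuel i st).1) := by
  intro fuel
  induction fuel with
  | zero => intro i st h; exact absurd h (Nat.not_lt_zero _)
  | succ fuel ih =>
    intro i st hcard
    simp only [dfsStep]
    have key : ∀ (L : List (Fin (n+1))), ∀ st₁ : DfsSt n, st.1 ⊆ st₁.1 →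
        (∀ w, G.Adj i w → w ∈ L ∨ w ∈ st₁.1) →
        (∀ w ∈ st₁.1, w ∉ st.1 → ∀ w', G.Adj w w' → w' ∈ st₁.1) →
        st₁.1 ⊆ (List.foldl
            (fun st j => if j ∈ st.1 then st
              else dfsStep G fuel j (insert j st.1, Function.update st.2 j i)) st₁ L).1 ∧
        (∀ w, G.Adj i w → w ∈ (List.foldl
            (fun st j => if j ∈ st.1 then st
              else dfsStep G fuel j (insert j st.1, Function.update st.2 j i)) st₁ L).1) ∧
        (∀ w ∈ (List.foldl
            (fun st j => if j ∈ st.1 then st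
              else dfsStep G fuel j (insert j st.1, Function.update st.2 j i)) st₁ L).1,
          w ∉ st.1 → ∀ w', G.Adj w w' → w' ∈ (List.foldl
            (fun st j => if j ∈ st.1 then st
              else dfsStep G fuel j (insert j st.1, Function.update st.2 j i)) st₁ L).1) := by
      intro L
      induction L with
      | nil =>
        intro st₁ hsub hmem hclo
        refine ⟨Finset.Subset.refl _, ?_, hclo⟩
        intro w hw
        rcases hmem w hw with h | h
        · exact (List.not_mem_nil h).elim
        · exact h
      | cons j tl ihL =>
        intro st₁ hsub hmem hclo
        simp only [List.foldl_cons]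
        by_cases hj : j ∈ st₁.1
        · rw [if_pos hj]
          refine ihL st₁ hsub ?_ hclo
          intro w hw
          rcases hmem w hw with hwL | hwv
          · rcases List.mem_cons.mp hwL with rfl | hwtl
            · exact Or.inr hj
            · exact Or.inl hwtl
          · exact Or.inr hwv
        · rw [if_neg hj]
          set st₂ : DfsSt n := (insert j st₁.1, Function.update st₁.2 j i) with hst₂
          have hcard2 : (univ \ st₂.1).card < fuel := by
            have h1 : (univ \ st₁.1).card ≤ (univ \ st.1).card :=
              Finset.card_le_card (Finset.sdiff_subset_sdiff (Finset.Subset.refl _) hsub)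
            have hjmem : j ∈ univ \ st₁.1 := Finset.mem_sdiff.mpr ⟨Finset.mem_univ _, hj⟩
            have h2 : (univ \ st₂.1).card = (univ \ st₁.1).card - 1 := by
              have : univ \ st₂.1 = (univ \ st₁.1).erase j := by
                ext x
                simp only [hst₂, Finset.mem_sdiff, Finset.mem_univ, true_and,
                  Finset.mem_insert, Finset.mem_erase]
                tauto
              rw [this, Finset.card_erase_of_mem hjmem]
            have h3 : 1 ≤ (univ \ st₁.1).card := Finset.card_pos.mpr ⟨j, hjmem⟩ 
            omega
          obtain ⟨hsub3, hnb3, hclo3⟩ := ih j st₂ hcard2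
          set st₃ := dfsStep G fuel j st₂ with hst₃
          have hsub23 : st₂.1 ⊆ st₃.1 := hsub3
          have hsub13 : st₁.1 ⊆ st₃.1 :=
            (Finset.subset_insert _ _).trans hsub23
          have hres := ihL st₃ (hsub.trans hsub13) ?_ ?_
          · exact ⟨hsub13.trans hres.1, hres.2.1, hres.2.2⟩
          · intro w hw
            rcases hmem w hw with hwL | hwv
            · rcases List.mem_cons.mp hwL with rfl | hwtl
              · exact Or.inr (hsub23 (Finset.mem_insert_self _ _))
              · exact Or.inl hwtl
            · exact Or.inr (hsub13 hwv)
          · intro w hw hwst w' hww'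
            by_cases hw1 : w ∈ st₁.1
            · exact hsub13 (hclo w hw1 hwst w' hww')
            · by_cases hwj : w = j
              · subst hwj
                exact hnb3 w' hww'
              · have hw2 : w ∉ st₂.1 := by
                  simp only [hst₂, Finset.mem_insert]
                  push_neg
                  exact ⟨hwj, hw1⟩
                exact hclo3 w hw hw2 w' hww'
    have hmem0 : ∀ w, G.Adj i w → w ∈ nbrs G i ∨ w ∈ st.1 :=
      fun w hw => Or.inl ((mem_nbrs G i w).mpr hw)
    exact key (nbrs G i) st (Finset.Subset.refl _) hmem0
      (fun w hw hw' _ _ => absurd hw hw')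

lemma dfs_facts (G : SimpleGraph (Fin (n+1))) (hG : G.Connected) (r : Fin (n+1)) :
    (dfsParent G r) r = r ∧ (∀ v, ∃ k, (dfsParent G r)^[k] v = r) ∧
    (∀ i v : Fin (n+1), (∃ m, 0 < m ∧ (dfsParent G r)^[m] v = i) → i ≠ r →
      G.Adj ((dfsParent G r) i) v → v < i) := by
  classical
  set st0 : DfsSt n := ({r}, fun _ => r) with hst0
  have hInv0 : Inv r st0 := by
    refine ⟨Finset.mem_singleton_self r, rfl, ?_, ?_⟩
    · intro v hv; exact Finset.mem_singleton_self r
    · intro v hv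
      rw [Finset.mem_singleton] at hv
      exact ⟨0, hv⟩
  have hconst : ∀ (m : ℕ) (v : Fin (n+1)), st0.2^[m+1] v = r := by
    intro m v
    rw [Function.iterate_succ_apply]
    exact Function.iterate_fixed rfl m
  have hO0 : OInv G r st0 := by
    intro i v hv hanc hir hadj
    obtain ⟨m, hm, hc⟩ := hanc
    obtain ⟨m', rfl⟩ := Nat.exists_eq_succ_of_ne_zero (Nat.pos_iff_ne_zero.mp hm)
    exact absurd ((hconst m' v).symm.trans hc) (Ne.symm hir)
  have hS0 : Stack G r r st0 := by
    intro m w hne _ _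
    exfalso
    apply hne
    cases m with
    | zero => rfl
    | succ m => exact hconst m r
  obtain ⟨hE, hInvF, hOF, _⟩ :=
    dfsA G r (n+1) r st0 (Finset.mem_singleton_self r) hInv0 hO0 hS0
  have hcard0 : (univ \ st0.1).card < n + 1 := by
    rw [Finset.card_sdiff_of_subset (Finset.subset_univ _)]
    rw [Finset.card_univ, Fintype.card_fin]
    have : st0.1.card = 1 := by simp [hst0]
    omega
  obtain ⟨hsubB, hnbB, hcloB⟩ := dfsB G (n+1) r st0 hcard0
  set F := dfsStep G (n+1) r st0 with hF
  have huniv : ∀ v : Fin (n+1), v ∈ F.1 := by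
    have hwalk : ∀ (u v : Fin (n+1)) (w : G.Walk u v), u ∈ F.1 → v ∈ F.1 := by
      intro u v w
      induction w with
      | nil => exact id
      | @cons a b c h p ihp =>
        intro ha
        apply ihp
        by_cases har : a = r
        · exact hnbB b (har ▸ h)
        · refine hcloB a ha ?_ b h
          simp [hst0, har]
    intro v
    obtain ⟨w⟩ := hG.preconnected r v
    exact hwalk r v w (hE.1 (Finset.mem_singleton_self r))
  have hpar : dfsParent G r = F.2 := rfl
  refine ⟨?_, ?_, ?_⟩
  · rw [hpar]; exact hInvF.2.1
  · intro v; rw [hpar]; exact hInvF.2.2.2 v (huniv v)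
  · intro i v hanc hir hadj
    rw [hpar] at hanc hadj
    exact hOF i v (huniv v) hanc hir hadj



lemma count_lemma {n : ℕ} (G : SimpleGraph (Fin (n+1))) (r : Fin (n+1))
    (par : Fin (n+1) → Fin (n+1)) (hF1 : par r = r)
    (hF2 : ∀ v, ∃ k, par^[k] v = r)
    (hF3 : ∀ i v : Fin (n+1), (∃ m, 0 < m ∧ par^[m] v = i) → i ≠ r →
      G.Adj (par i) v → v < i) :
    PFG.kappaNum G r par + Set.ncard {e : Sym2 (Fin (n+1)) | e ∈ G.edgeSet ∧
        e ∉ PFG.treeEdges r par ∧ ∀ u v : Fin (n+1), e = s(u, v) →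
          ¬ PFG.IsAncestor par u v ∧ ¬ PFG.IsAncestor par v u} =
    Set.ncard {e : Sym2 (Fin (n+1)) | e ∈ G.edgeSet ∧ e ∉ PFG.treeEdges r par} := by
  classical
  have hnc : ∀ (v : Fin (n+1)) (a : ℕ), 0 < a → par^[a] v = v → v = r := by
    intro v a ha hfix
    obtain ⟨k, hk⟩ := hF2 v
    rcases Nat.eq_zero_or_pos k with h0 | hkpos
    · rw [h0] at hk; exact hk
    · have hper : par^[a * k] v = v := by
        rw [Function.iterate_mul]
        exact Function.iterate_fixed hfix k
      have hle : k ≤ a * k := Nat.le_mul_of_pos_left k ha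
      have h2 : par^[(a * k - k) + k] v = v := by rw [Nat.sub_add_cancel hle]; exact hper
      rw [Function.iterate_add_apply, hk, Function.iterate_fixed hF1] at h2
      exact h2.symm
  set T := PFG.treeEdges r par with hTdef
  set B := {e : Sym2 (Fin (n+1)) | e ∈ G.edgeSet ∧ e ∉ T ∧
      ∀ u v : Fin (n+1), e = s(u, v) →
        ¬ PFG.IsAncestor par u v ∧ ¬ PFG.IsAncestor par v u} with hBdef
  set A := {e : Sym2 (Fin (n+1)) | e ∈ G.edgeSet ∧ e ∉ T} with hAdef
  set K := {p : Fin (n+1) × Fin (n+1) | PFG.IsKappaInversion G r par p.1 p.2} with hKdef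
  have hkappa : PFG.kappaNum G r par = K.ncard := rfl
  have hBA : B ⊆ A := fun e he => ⟨he.1, he.2.1⟩
  have hsplit := Set.ncard_diff_add_ncard_of_subset hBA (Set.toFinite A)
  set f : Fin (n+1) × Fin (n+1) → Sym2 (Fin (n+1)) :=
    (fun p => s(par p.1, p.2)) with hfdef
  have himg : f '' K = A \ B := by
    apply Set.Subset.antisymm
    · rintro e ⟨⟨i, j⟩, hk, rfl⟩
      simp only [hKdef, Set.mem_setOf_eq, PFG.IsKappaInversion, PFG.IsAncestor] at hk
      obtain ⟨⟨m, hm, hmc⟩, hji, hir, hadj⟩ := hk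
      have hfe : f (i, j) = s(par i, j) := rfl
      rw [hfe]
      refine ⟨⟨(SimpleGraph.mem_edgeSet G).mpr hadj, ?_⟩, ?_⟩
      · -- not a tree edge
        intro hmem
        obtain ⟨v, hvr, hev⟩ := hmem
        rcases Sym2.eq_iff.mp hev with ⟨h1, h2⟩ | ⟨h1, h2⟩
        · -- par i = par v, j = v
          subst h2
          have hpj : par^[m] (par j) = par j := by
            rw [← Function.iterate_succ_apply, Function.iterate_succ_apply', hmc, h1]
          have hpjr : par j = r := hnc (par j) m hm hpj
          obtain ⟨m', rfl⟩ := Nat.exists_eq_succ_of_ne_zero (Nat.pos_iff_ne_zero.mp hm)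
          apply hir
          rw [← hmc, Function.iterate_succ_apply, hpjr]
          exact Function.iterate_fixed hF1 m'
        · -- par i = v, j = par v
          rw [← h1] at h2
          have h2i : par^[2] i = par (par i) := by
            rw [Function.iterate_succ_apply, Function.iterate_one]
          have hcyc : par^[m+2] i = i := by
            rw [Function.iterate_add_apply, h2i, ← h2, hmc]
          exact hir (hnc i (m+2) (by omega) hcyc)
      · -- not in B
        intro hb
        refine (hb.2.2 (par i) j rfl).1 ⟨m+1, Nat.succ_pos m, ?_⟩
        rw [Function.iterate_succ_apply', hmc]
    · rintro e ⟨⟨heE, heT⟩, heB⟩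
      have hrel : ∃ u v : Fin (n+1), e = s(u, v) ∧ PFG.IsAncestor par u v := by
        by_contra hcon
        push_neg at hcon
        exact heB ⟨heE, heT, fun u v huv =>
          ⟨hcon u v huv, hcon v u (huv.trans Sym2.eq_swap)⟩⟩
      obtain ⟨u, v, hev, k0, hk0, hk0c⟩ := hrel
      have hadjuv : G.Adj u v := (SimpleGraph.mem_edgeSet G).mp (hev ▸ heE)
      have hPex : ∃ k, 0 < k ∧ par^[k] v = u := ⟨k0, hk0, hk0c⟩
      obtain ⟨hkpos, hkc⟩ := Nat.find_spec hPex
      set k := Nat.find hPex with hkdef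
      have hvr : v ≠ r := by
        intro h
        rw [h, Function.iterate_fixed hF1] at hkc
        exact hadjuv.ne (hkc.symm.trans h.symm)
      have hk2 : 2 ≤ k := by
        by_contra hlt
        have hk1 : k = 1 := by omega
        apply heT
        refine ⟨v, hvr, ?_⟩
        rw [hev, ← hkc, hk1, Function.iterate_one]
      set i := par^[k-1] v with hidef
      have hki : k - 1 + 1 = k := by omega
      have hpi : par i = u := by
        have hstep : par^[k-1+1] v = par (par^[k-1] v) :=
          Function.iterate_succ_apply' par (k-1) v
        rw [hki] at hstep
        rw [hidef, ← hstep, hkc]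
      have hir : i ≠ r := by
        intro h
        have hur : u = r := by rw [← hpi, h, hF1]
        refine Nat.find_min hPex (show k - 1 < k by omega) ⟨by omega, ?_⟩
        rw [← hidef, h, hur]
      have hanc : ∃ m, 0 < m ∧ par^[m] v = i := ⟨k-1, by omega, hidef.symm⟩
      have hadji : G.Adj (par i) v := by rw [hpi]; exact hadjuv
      have hlt := hF3 i v hanc hir hadji
      refine ⟨(i, v), ?_, ?_⟩
      · simp only [hKdef, Set.mem_setOf_eq, PFG.IsKappaInversion, PFG.IsAncestor]
        exact ⟨hanc, hlt, hir, hadji⟩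
      · show s(par i, v) = e
        rw [hpi, ← hev]
  have hinj : Set.InjOn f K := by
    rintro ⟨i, j⟩ hij ⟨i', j'⟩ hij' heq
    simp only [hKdef, Set.mem_setOf_eq, PFG.IsKappaInversion, PFG.IsAncestor] at hij hij'
    obtain ⟨⟨m, hm, hmc⟩, hji, hir, hadj⟩ := hij
    obtain ⟨⟨m', hm', hmc'⟩, hji', hir', hadj'⟩ := hij'
    have heq' : s(par i, j) = s(par i', j') := heq
    rcases Sym2.eq_iff.mp heq' with ⟨h1, h2⟩ | ⟨h1, h2⟩
    · subst h2
      have key : ∀ (a b : Fin (n+1)) (ma mb : ℕ), 0 < ma → par^[ma] j = a →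
          par^[mb] j = b → par a = par b → b ≠ r → ma ≤ mb → a = b := by
        intro a b ma mb hma hca hcb hpab hbr hle
        rcases Nat.eq_or_lt_of_le hle with rfl | hlt2
        · rw [← hca, ← hcb]
        · exfalso
          have e1 : par^[ma+1] j = par a := by rw [Function.iterate_succ_apply', hca]
          have e2 : par^[mb+1] j = par b := by rw [Function.iterate_succ_apply', hcb]
          have efix : par^[mb - ma] (par^[ma+1] j) = par^[ma+1] j := by
            rw [← Function.iterate_add_apply,
              show (mb - ma) + (ma+1) = mb+1 by omega, e2, e1, hpab]
          have hpr : par a = r := by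
            rw [← e1]; exact hnc _ _ (by omega) efix
          apply hbr
          rw [← hcb, show mb = (mb - ma - 1) + (ma + 1) by omega,
            Function.iterate_add_apply, e1, hpr]
          exact Function.iterate_fixed hF1 _
      have haux : i = i' := by
        rcases le_total m m' with h | h
        · exact key i i' m m' hm hmc hmc' h1 hir' h
        · exact (key i' i m' m hm' hmc' hmc h1.symm hir h).symm
      rw [haux]
    · exfalso
      have e1 : par^[m+1] i' = i := by rw [Function.iterate_succ_apply, ← h2, hmc]
      have e2 : par^[m'+1] i = i' := by rw [Function.iterate_succ_apply, h1, hmc']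
      have hcyc : par^[(m+1) + (m'+1)] i = i := by
        rw [Function.iterate_add_apply, e2, e1]
      exact hir (hnc i _ (by omega) hcyc)
  rw [hkappa, ← hsplit, ← himg, Set.ncard_image_of_injOn hinj]

end PFGProof


/-- For `T = DFS(G)`, the number of κ-inversions of `T` equals the number of
edges of `G` not in `T` minus the number of non-tree edges `{u,v}` such that
neither endpoint is a proper ancestor of the other in `T` (stated additively). -/
theorem kappa_dfs_eq_nontree_minus_unrelated {n : ℕ}
    (G : SimpleGraph (Fin (n+1))) (hG : G.Connected) (r : Fin (n+1)) :
    PFG.kappaNum G r (PFG.dfsParent G r) +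
      Set.ncard {e : Sym2 (Fin (n+1)) | e ∈ G.edgeSet ∧
        e ∉ PFG.treeEdges r (PFG.dfsParent G r) ∧
        ∀ u v : Fin (n+1), e = s(u, v) →
          ¬ PFG.IsAncestor (PFG.dfsParent G r) u v ∧
          ¬ PFG.IsAncestor (PFG.dfsParent G r) v u} =
    Set.ncard {e : Sym2 (Fin (n+1)) | e ∈ G.edgeSet ∧
        e ∉ PFG.treeEdges r (PFG.dfsParent G r)} := by
  obtain ⟨hF1, hF2, hF3⟩ := PFGProof.dfs_facts G hG r
  exact PFGProof.count_lemma G r (PFG.dfsParent G r) hF1 hF2 hF3
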